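/- (Observability for spectral clusters from uniform observability of the Schrödinger flow) Let H be a self-adjoint Schrödinger operator H = -Δ + V on L^2(T^d) with V ∈ L^∞, S ⊂ T^d measurable, T > 0, and suppose the observability inequality ‖g‖²_{L²(T^d)} ≤ C ∫_0^T ‖e^{-itH}g‖²_{L²(S)} dt holds for all g ∈ L²(T^d). Suppose also the eigenvalue counting bound #{k : E_k ∈ [E-w, E]} ≤ C_d² E^{d/2} holds. Then for every E > 0 and every w ≤ (1/4)(C_d² C T³ E^{d/2})^{-1/2}, every finite linear combination f = Σ_{E-w ≤ E_k ≤ E} α_k ψ_k of normalized eigenfunctions ψ_k of H with eigenvalues E_k ∈ [E-w, E] satisfies ‖f‖²_{L²(T^d)} ≤ 4CT ‖f‖²_{L²(S)}. -/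

import Mathlib

open MeasureTheory
open scoped InnerProductSpace

lemma aux_exp_dist (x y : ℝ) :
    ‖Complex.exp ((x : ℂ) * Complex.I) - Complex.exp ((y : ℂ) * Complex.I)‖ ≤ |x - y| := by
  have h1 : Complex.exp ((x : ℂ) * Complex.I) - Complex.exp ((y : ℂ) * Complex.I)
      = ((Real.cos x - Real.cos y : ℝ) : ℂ) + ((Real.sin x - Real.sin y : ℝ) : ℂ) * Complex.I := by
    rw [Complex.exp_mul_I, Complex.exp_mul_I]
    push_cast [← Complex.ofReal_cos, ← Complex.ofReal_sin]
    ring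
  rw [h1, Complex.norm_add_mul_I]
  have hb : (Real.cos x - Real.cos y) ^ 2 + (Real.sin x - Real.sin y) ^ 2 ≤ (x - y) ^ 2 := by
    have h2 := Real.cos_sub x y
    have h3 : Real.sin ((x - y) / 2) ^ 2 = 1 / 2 - Real.cos (2 * ((x - y) / 2)) / 2 :=
      Real.sin_sq_eq_half_sub _
    rw [show 2 * ((x - y) / 2) = x - y by ring] at h3
    have h4 : Real.sin ((x - y) / 2) ^ 2 ≤ ((x - y) / 2) ^ 2 := Real.sin_sq_le_sq
    have h5 := Real.sin_sq_add_cos_sq x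
    have h6 := Real.sin_sq_add_cos_sq y
    nlinarith
  calc Real.sqrt ((Real.cos x - Real.cos y) ^ 2 + (Real.sin x - Real.sin y) ^ 2)
      ≤ Real.sqrt ((x - y) ^ 2) := Real.sqrt_le_sqrt hb
    _ = |x - y| := Real.sqrt_sq_eq_abs _

lemma aux_norm_sum {H : Type*} [NormedAddCommGroup H] [InnerProductSpace ℂ H] {N : ℕ}
    {ψ : Fin N → H} (h : Orthonormal ℂ ψ) (c : Fin N → ℂ) :
    ‖∑ k, c k • ψ k‖ ^ 2 = ∑ k, ‖c k‖ ^ 2 := by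
  have h2 := h.inner_sum c c Finset.univ
  have h3 : ‖∑ k, c k • ψ k‖ ^ 2 = RCLike.re ⟪∑ k, c k • ψ k, ∑ k, c k • ψ k⟫_ℂ :=
    norm_sq_eq_re_inner (𝕜 := ℂ) _
  rw [h3, h2]
  rw [RCLike.re_to_complex, Complex.re_sum]
  refine Finset.sum_congr rfl fun k _ => ?_
  rw [Complex.sq_norm]
  simp [Complex.normSq_apply, Complex.mul_re]

set_option maxHeartbeats 1600000 in
theorem stmt_17 {H H' : Type*} [NormedAddCommGroup H] [InnerProductSpace ℂ H]
    [NormedAddCommGroup H'] [InnerProductSpace ℂ H']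
    (d : ℕ) (U : ℝ → H →L[ℂ] H) (R : H →L[ℂ] H') (hR : ‖R‖ ≤ 1)
    (C T Cd E w : ℝ) (hT : 0 < T) (hC : 0 ≤ C) (hE : 0 < E) (hw : 0 ≤ w)
    (hobs : ∀ g : H, ‖g‖ ^ 2 ≤ C * ∫ t in (0 : ℝ)..T, ‖R (U t g)‖ ^ 2)
    (N : ℕ) (ψ : Fin N → H) (horth : Orthonormal ℂ ψ)
    (Ek : Fin N → ℝ) (hEk : ∀ k, Ek k ∈ Set.Icc (E - w) E)
    (hU : ∀ (t : ℝ) (k : Fin N),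
      U t (ψ k) = Complex.exp (-(Complex.I * (t : ℂ) * (Ek k : ℂ))) • ψ k)
    (hcount : (N : ℝ) ≤ Cd ^ 2 * E ^ ((d : ℝ) / 2))
    (hwsmall : w ≤ (1 / 4) * (Cd ^ 2 * C * T ^ 3 * E ^ ((d : ℝ) / 2)) ^ (-(1 : ℝ) / 2)) :
    ∀ α : Fin N → ℂ,
      ‖∑ k, α k • ψ k‖ ^ 2 ≤ 4 * C * T * ‖R (∑ k, α k • ψ k)‖ ^ 2 := by
  intro α
  set f : H := ∑ k, α k • ψ k with hf
  -- trivial cases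
  by_cases hC0 : C = 0
  · have h := hobs f
    simp only [hC0, zero_mul] at h
    have hz : (4 : ℝ) * C * T * ‖R f‖ ^ 2 = 0 := by rw [hC0]; ring
    linarith
  have hCpos : 0 < C := lt_of_le_of_ne hC (Ne.symm hC0)
  rcases Nat.eq_zero_or_pos N with hN0 | hN
  · subst hN0
    simp only [hf, Finset.univ_eq_empty, Finset.sum_empty, norm_zero, map_zero]
    nlinarith
  -- key constants
  have hE2 : (0 : ℝ) < E ^ ((d : ℝ) / 2) := Real.rpow_pos_of_pos hE _
  have hN1 : (1 : ℝ) ≤ Cd ^ 2 * E ^ ((d : ℝ) / 2) := by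
    calc (1 : ℝ) ≤ (N : ℝ) := by exact_mod_cast hN
    _ ≤ _ := hcount
  have hCd : 0 < Cd ^ 2 := by nlinarith
  have hB : 0 < Cd ^ 2 * C * T ^ 3 * E ^ ((d : ℝ) / 2) := by positivity
  set B : ℝ := Cd ^ 2 * C * T ^ 3 * E ^ ((d : ℝ) / 2) with hBdef
  have hsq : (B ^ (-(1 : ℝ) / 2)) ^ 2 = B⁻¹ := by
    rw [← Real.rpow_natCast (B ^ (-(1 : ℝ) / 2)) 2, ← Real.rpow_mul hB.le]
    norm_num
    exact Real.rpow_neg_one B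
  have hw2 : w ^ 2 ≤ (1 / 16) * B⁻¹ := by
    have h := pow_le_pow_left₀ hw hwsmall 2
    rw [mul_pow, hsq] at h
    calc w ^ 2 ≤ (1 / 4) ^ 2 * B⁻¹ := h
      _ = (1 / 16) * B⁻¹ := by norm_num
  have hkey : 2 * C * T ^ 3 * w ^ 2 ≤ 1 / 2 := by
    have h1 : 2 * C * T ^ 3 * w ^ 2 ≤ 2 * C * T ^ 3 * ((1 / 16) * B⁻¹) := by
      apply mul_le_mul_of_nonneg_left hw2 (by positivity)
    have h2 : 2 * C * T ^ 3 * ((1 / 16) * B⁻¹) = (1 / 8) * (Cd ^ 2 * E ^ ((d : ℝ) / 2))⁻¹ := by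
      rw [hBdef]
      field_simp
      ring
    have h3 : (Cd ^ 2 * E ^ ((d : ℝ) / 2))⁻¹ ≤ 1 := inv_le_one_of_one_le₀ hN1
    nlinarith
  -- norm of f
  have hnf : ‖f‖ ^ 2 = ∑ k, ‖α k‖ ^ 2 := aux_norm_sum horth α
  -- propagator formula
  have hUf : ∀ t : ℝ, U t f = ∑ k, (Complex.exp (-(Complex.I * (t : ℂ) * (Ek k : ℂ))) * α k) • ψ k := by
    intro t
    rw [hf, map_sum]
    refine Finset.sum_congr rfl fun k _ => ?_
    rw [ContinuousLinearMap.map_smul, hU, smul_smul, mul_comm]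
  -- pointwise estimate
  have hpoint : ∀ t ∈ Set.Icc (0 : ℝ) T,
      ‖R (U t f)‖ ^ 2 ≤ 2 * (T * w * ‖f‖) ^ 2 + 2 * ‖R f‖ ^ 2 := by
    intro t ht
    set e : ℂ := Complex.exp (-(Complex.I * (t : ℂ) * (E : ℂ))) with he
    have hnorme : ‖e‖ = 1 := by
      rw [he, Complex.norm_exp]
      simp [Complex.exp_re]
    have hdiff : U t f - e • f = ∑ k,
        ((Complex.exp (-(Complex.I * (t : ℂ) * (Ek k : ℂ))) - e) * α k) • ψ k := by
      rw [hUf t, hf, Finset.smul_sum, ← Finset.sum_sub_distrib]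
      refine Finset.sum_congr rfl fun k _ => ?_
      rw [smul_smul, ← sub_smul, ← sub_mul]
    have hcoef : ∀ k : Fin N,
        ‖Complex.exp (-(Complex.I * (t : ℂ) * (Ek k : ℂ))) - e‖ ≤ T * w := by
      intro k
      have e1 : (-(Complex.I * (t : ℂ) * (Ek k : ℂ))) = ((-(t * Ek k) : ℝ) : ℂ) * Complex.I := by
        push_cast; ring
      have e2 : (-(Complex.I * (t : ℂ) * (E : ℂ))) = ((-(t * E) : ℝ) : ℂ) * Complex.I := by
        push_cast; ring
      rw [he, e1, e2]
      refine (aux_exp_dist _ _).trans ?_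
      have h1 : |(-(t * Ek k)) - (-(t * E))| = |t| * |E - Ek k| := by
        rw [← abs_mul]; congr 1; ring
      rw [h1]
      have hk := hEk k
      have h2 : |t| ≤ T := by rw [abs_of_nonneg ht.1]; exact ht.2
      have h3 : |E - Ek k| ≤ w := by
        rw [abs_of_nonneg (by linarith [hk.2])]
        linarith [hk.1]
      exact mul_le_mul h2 h3 (abs_nonneg _) hT.le
    have hd2 : ‖U t f - e • f‖ ^ 2 ≤ (T * w * ‖f‖) ^ 2 := by
      rw [hdiff, aux_norm_sum horth]
      have : ∀ k : Fin N,
          ‖(Complex.exp (-(Complex.I * (t : ℂ) * (Ek k : ℂ))) - e) * α k‖ ^ 2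
            ≤ (T * w) ^ 2 * ‖α k‖ ^ 2 := by
        intro k
        rw [norm_mul, mul_pow]
        exact mul_le_mul_of_nonneg_right
          (pow_le_pow_left₀ (norm_nonneg _) (hcoef k) 2) (sq_nonneg _)
      calc ∑ k, ‖(Complex.exp (-(Complex.I * (t : ℂ) * (Ek k : ℂ))) - e) * α k‖ ^ 2
          ≤ ∑ k, (T * w) ^ 2 * ‖α k‖ ^ 2 := Finset.sum_le_sum fun k _ => this k
        _ = (T * w) ^ 2 * ∑ k, ‖α k‖ ^ 2 := by rw [Finset.mul_sum]
        _ = (T * w * ‖f‖) ^ 2 := by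
            rw [show (T * w * ‖f‖) ^ 2 = (T * w) ^ 2 * ‖f‖ ^ 2 by ring, hnf]
    have hd : ‖U t f - e • f‖ ≤ T * w * ‖f‖ := by
      have h0 : (0 : ℝ) ≤ T * w * ‖f‖ := by positivity
      nlinarith [norm_nonneg (U t f - e • f), hd2]
    have htri : ‖R (U t f)‖ ≤ T * w * ‖f‖ + ‖R f‖ := by
      calc ‖R (U t f)‖ = ‖R (U t f - e • f) + R (e • f)‖ := by rw [← map_add, sub_add_cancel]
        _ ≤ ‖R (U t f - e • f)‖ + ‖R (e • f)‖ := norm_add_le _ _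
        _ ≤ ‖U t f - e • f‖ + ‖R f‖ := by
            gcongr
            · calc ‖R (U t f - e • f)‖ ≤ ‖R‖ * ‖U t f - e • f‖ := R.le_opNorm _
                _ ≤ 1 * ‖U t f - e • f‖ := by
                    apply mul_le_mul_of_nonneg_right hR (norm_nonneg _)
                _ = ‖U t f - e • f‖ := one_mul _
            · rw [R.map_smul, norm_smul, hnorme, one_mul]
        _ ≤ T * w * ‖f‖ + ‖R f‖ := add_le_add_left hd _
    have h2 : ‖R (U t f)‖ ^ 2 ≤ (T * w * ‖f‖ + ‖R f‖) ^ 2 :=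
      pow_le_pow_left₀ (norm_nonneg _) htri 2
    have h3 : (T * w * ‖f‖ + ‖R f‖) ^ 2
        = (T * w * ‖f‖) ^ 2 + 2 * (T * w * ‖f‖) * ‖R f‖ + ‖R f‖ ^ 2 := by ring
    have h4 : 2 * (T * w * ‖f‖) * ‖R f‖ ≤ (T * w * ‖f‖) ^ 2 + ‖R f‖ ^ 2 :=
      two_mul_le_add_sq _ _
    linarith
  -- integrability
  have hFcont : Continuous fun t : ℝ => ‖R (U t f)‖ ^ 2 := by
    have : (fun t : ℝ => ‖R (U t f)‖ ^ 2)
        = fun t : ℝ => ‖R (∑ k, (Complex.exp (-(Complex.I * (t : ℂ) * (Ek k : ℂ))) * α k) • ψ k)‖ ^ 2 := by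
      funext t; rw [hUf t]
    rw [this]
    apply Continuous.pow
    apply Continuous.norm
    apply R.continuous.comp
    apply continuous_finset_sum
    intro k _
    apply Continuous.smul _ continuous_const
    apply Continuous.mul _ continuous_const
    apply Complex.continuous_exp.comp
    fun_prop
  have hint : IntervalIntegrable (fun t : ℝ => ‖R (U t f)‖ ^ 2) volume 0 T :=
    hFcont.intervalIntegrable 0 T
  have hmono : (∫ t in (0 : ℝ)..T, ‖R (U t f)‖ ^ 2)
      ≤ ∫ t in (0 : ℝ)..T, (2 * (T * w * ‖f‖) ^ 2 + 2 * ‖R f‖ ^ 2) := by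
    apply intervalIntegral.integral_mono_on hT.le hint intervalIntegrable_const
    exact hpoint
  have hconst : (∫ t in (0 : ℝ)..T, (2 * (T * w * ‖f‖) ^ 2 + 2 * ‖R f‖ ^ 2))
      = T * (2 * (T * w * ‖f‖) ^ 2 + 2 * ‖R f‖ ^ 2) := by
    rw [intervalIntegral.integral_const, smul_eq_mul, sub_zero]
  have hmain : ‖f‖ ^ 2 ≤ 2 * C * T ^ 3 * w ^ 2 * ‖f‖ ^ 2 + 2 * C * T * ‖R f‖ ^ 2 := by
    calc ‖f‖ ^ 2 ≤ C * ∫ t in (0 : ℝ)..T, ‖R (U t f)‖ ^ 2 := hobs f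
      _ ≤ C * (T * (2 * (T * w * ‖f‖) ^ 2 + 2 * ‖R f‖ ^ 2)) := by
          rw [← hconst]; exact mul_le_mul_of_nonneg_left hmono hC
      _ = 2 * C * T ^ 3 * w ^ 2 * ‖f‖ ^ 2 + 2 * C * T * ‖R f‖ ^ 2 := by ring
  nlinarith [sq_nonneg ‖f‖, sq_nonneg ‖R f‖, mul_le_mul_of_nonneg_right hkey (sq_nonneg ‖f‖)]
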